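/- (Theorem 2, inequality (7).) Let c ∈ (0, 1/2), K ≥ 2, let X be a measurable space, P a probability measure on X × {1,…,K}, and g : X → ℝ^K a measurable score function. Then the zero-one-c regret of the induced decision rule f(·; g) is bounded by the regret of the cost-sensitive surrogate with the margin zero-one loss: R01c(f(·; g)) − R01c* ≤ R_CS^{ℓ01}(g) − R_CS^{ℓ01,*}; moreover the Bayes risks coincide: R01c* = R_CS^{ℓ01,*}. -/
import Mathlib


open Classical MeasureTheory

/-- The discrete σ-algebra on decisions (`none` = rejection ®). -/
instance {K : ℕ} : MeasurableSpace (Option (Fin K)) := ⊤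

/-- The margin zero-one loss: `ℓ01(z) = 1` if `z ≤ 0` and `0` otherwise. -/
noncomputable def mloss01 (z : ℝ) : ℝ := if z ≤ 0 then 1 else 0

/-- The cost-sensitive surrogate loss `L_CS^φ(g, y) = c·φ(g_y) + (1−c)·∑_{y'≠y} φ(−g_{y'})`. -/
noncomputable def LCS {K : ℕ} (φ : ℝ → ℝ) (c : ℝ) (g : Fin K → ℝ) (y : Fin K) : ℝ :=
  c * φ (g y) + (1 - c) * ∑ y' ∈ Finset.univ.erase y, φ (-(g y'))

/-- The decision rule induced by a score vector `g`: reject (`none`) if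
`max_y g_y ≤ 0` or if two distinct coordinates of `g` are strictly positive,
otherwise output the unique class `y` with `g_y > 0`. -/
noncomputable def decRule {K : ℕ} (g : Fin K → ℝ) : Option (Fin K) :=
  if h : ∃! y, 0 < g y then some h.choose else none

/-- The zero-one-c loss of a decision (`none` = rejection ®) against a label `y`:
`c` for rejection, `0` for the correct class, `1` for a wrong class. -/
noncomputable def loss01c {K : ℕ} (c : ℝ) (y : Fin K) : Option (Fin K) → ℝ
  | none => c
  | some z => if z = y then 0 else 1

/-- The zero-one-c risk of a decision rule `h` under `P`:
`R01c(h) = E_{(x,y)∼P}[ℓ01c(h(x), y)]`. -/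
noncomputable def R01c {X : Type*} [MeasurableSpace X] {K : ℕ} (c : ℝ)
    (P : Measure (X × Fin K)) (h : X → Option (Fin K)) : ℝ :=
  ∫ p, loss01c c p.2 (h p.1) ∂P

/-- The Bayes zero-one-c risk: the infimum of `R01c` over measurable decision rules. -/
noncomputable def R01cStar (X : Type*) [MeasurableSpace X] (K : ℕ) (c : ℝ)
    (P : Measure (X × Fin K)) : ℝ :=
  sInf {r : ℝ | ∃ h : X → Option (Fin K), Measurable h ∧ r = R01c c P h}

/-- The cost-sensitive surrogate risk `R_CS^φ(g) = E_{(x,y)∼P}[L_CS^φ(g(x), y)]`. -/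
noncomputable def RCS {X : Type*} [MeasurableSpace X] {K : ℕ} (φ : ℝ → ℝ) (c : ℝ)
    (P : Measure (X × Fin K)) (g : X → Fin K → ℝ) : ℝ :=
  ∫ p, LCS φ c (g p.1) p.2 ∂P

/-- The infimum of the cost-sensitive surrogate risk over measurable score functions. -/
noncomputable def RCSStar (X : Type*) [MeasurableSpace X] (K : ℕ) (φ : ℝ → ℝ) (c : ℝ)
    (P : Measure (X × Fin K)) : ℝ :=
  sInf {r : ℝ | ∃ g : X → Fin K → ℝ, Measurable g ∧ r = RCS φ c P g}

/-- The one-versus-rest cost-sensitive binary `φ`-risk of class `i`: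
`R^{φ,i}_{1−c}(u) = E[c·1[y = i]·φ(u(x)) + (1−c)·1[y ≠ i]·φ(−u(x))]`. -/
noncomputable def Rbin {X : Type*} [MeasurableSpace X] {K : ℕ} (φ : ℝ → ℝ) (c : ℝ)
    (P : Measure (X × Fin K)) (i : Fin K) (u : X → ℝ) : ℝ :=
  ∫ p, (if p.2 = i then c * φ (u p.1) else (1 - c) * φ (-(u p.1))) ∂P

/-- The infimum of the one-versus-rest cost-sensitive binary `φ`-risk of class `i`
over measurable functions. -/
noncomputable def RbinStar (X : Type*) [MeasurableSpace X] (K : ℕ) (φ : ℝ → ℝ) (c : ℝ)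
    (P : Measure (X × Fin K)) (i : Fin K) : ℝ :=
  sInf {r : ℝ | ∃ u : X → ℝ, Measurable u ∧ r = Rbin φ c P i u}

section AuxStmt12

lemma mloss01_nonneg (z : ℝ) : 0 ≤ mloss01 z := by unfold mloss01; split <;> norm_num

lemma mloss01_le_one (z : ℝ) : mloss01 z ≤ 1 := by unfold mloss01; split <;> norm_num

lemma measurable_mloss01 : Measurable mloss01 :=
  Measurable.ite measurableSet_Iic measurable_const measurable_const

lemma loss01c_nonneg {K : ℕ} {c : ℝ} (hc : 0 ≤ c) (y : Fin K) (d : Option (Fin K)) :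
    0 ≤ loss01c c y d := by
  cases d with
  | none => exact hc
  | some z => simp only [loss01c]; split <;> norm_num

lemma loss01c_le_one {K : ℕ} {c : ℝ} (hc : c ≤ 1) (y : Fin K) (d : Option (Fin K)) :
    loss01c c y d ≤ 1 := by
  cases d with
  | none => exact hc
  | some z => simp only [loss01c]; split <;> norm_num

lemma LCS_nonneg {K : ℕ} {c : ℝ} (hc0 : 0 ≤ c) (hc1 : c ≤ 1) (g : Fin K → ℝ) (y : Fin K) :
    0 ≤ LCS mloss01 c g y := by
  unfold LCS
  have h1 : 0 ≤ ∑ y' ∈ Finset.univ.erase y, mloss01 (-(g y')) :=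
    Finset.sum_nonneg fun _ _ => mloss01_nonneg _
  have := mloss01_nonneg (g y)
  nlinarith

lemma LCS_le {K : ℕ} {c : ℝ} (hc0 : 0 ≤ c) (hc1 : c ≤ 1) (g : Fin K → ℝ) (y : Fin K) :
    LCS mloss01 c g y ≤ 1 + K := by
  unfold LCS
  have h1 : ∑ y' ∈ Finset.univ.erase y, mloss01 (-(g y')) ≤ (K : ℝ) := by
    calc ∑ y' ∈ Finset.univ.erase y, mloss01 (-(g y'))
        ≤ ∑ y' ∈ (Finset.univ : Finset (Fin K)), mloss01 (-(g y')) :=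
          Finset.sum_le_sum_of_subset_of_nonneg (Finset.erase_subset _ _)
            (fun _ _ _ => mloss01_nonneg _)
      _ ≤ ∑ _y' ∈ (Finset.univ : Finset (Fin K)), (1 : ℝ) :=
          Finset.sum_le_sum fun _ _ => mloss01_le_one _
      _ = K := by simp
  have h0 : 0 ≤ ∑ y' ∈ Finset.univ.erase y, mloss01 (-(g y')) :=
    Finset.sum_nonneg fun _ _ => mloss01_nonneg _
  have := mloss01_le_one (g y)
  have := mloss01_nonneg (g y)
  nlinarith

lemma decRule_eq_some_iff {K : ℕ} (g : Fin K → ℝ) (z : Fin K) :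
    decRule g = some z ↔ 0 < g z ∧ ∀ y, 0 < g y → y = z := by
  unfold decRule
  split
  case isTrue h =>
    simp only [Option.some.injEq]
    constructor
    · rintro rfl
      exact ⟨h.choose_spec.1, fun y hy => h.choose_spec.2 y hy⟩
    · rintro ⟨hz, hu⟩
      exact (hu _ h.choose_spec.1)
  case isFalse h =>
    simp only [reduceCtorEq, false_iff, not_and]
    intro hz hu
    exact h ⟨z, hz, fun y hy => hu y hy⟩

lemma pointwise_le {K : ℕ} {c : ℝ} (hc0 : 0 < c) (hc : c < 1/2) (g : Fin K → ℝ) (y : Fin K) :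
    loss01c c y (decRule g) ≤ LCS mloss01 c g y := by
  have hc1 : c ≤ 1 := by linarith
  unfold decRule
  split
  case isTrue h =>
    by_cases hzy : h.choose = y
    · have : loss01c c y (some h.choose) = 0 := by simp [loss01c, hzy]
      rw [this]; exact LCS_nonneg hc0.le hc1 g y
    · have hl : loss01c c y (some h.choose) = 1 := by simp [loss01c, hzy]
      rw [hl]
      have hgy : g y ≤ 0 := by
        by_contra hpos
        push_neg at hpos
        exact hzy (h.choose_spec.2 y hpos).symm
      have hmem : h.choose ∈ Finset.univ.erase y := Finset.mem_erase.2 ⟨hzy, Finset.mem_univ _⟩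
      have hterm : mloss01 (-(g h.choose)) = 1 := by
        unfold mloss01; rw [if_pos]; linarith [h.choose_spec.1]
      have hsum : (1:ℝ) ≤ ∑ y' ∈ Finset.univ.erase y, mloss01 (-(g y')) := by
        have := Finset.single_le_sum (f := fun y' => mloss01 (-(g y')))
          (fun i _ => mloss01_nonneg _) hmem
        linarith
      have hφ : mloss01 (g y) = 1 := by unfold mloss01; rw [if_pos hgy]
      unfold LCS; rw [hφ]
      nlinarith
  case isFalse h =>
    show c ≤ _
    by_cases hex : ∃ a, 0 < g a
    · obtain ⟨a, ha⟩ := hex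
      have hb : ∃ b, 0 < g b ∧ b ≠ a := by
        by_contra hb
        push_neg at hb
        exact h ⟨a, ha, fun y hy => hb y hy⟩
      obtain ⟨b, hbpos, hba⟩ := hb
      obtain ⟨w, hw, hwy⟩ : ∃ w, 0 < g w ∧ w ≠ y := by
        by_cases hay : a = y
        · exact ⟨b, hbpos, by rw [hay] at hba; exact hba⟩
        · exact ⟨a, ha, hay⟩
      have hmem : w ∈ Finset.univ.erase y := Finset.mem_erase.2 ⟨hwy, Finset.mem_univ _⟩
      have hterm : mloss01 (-(g w)) = 1 := by unfold mloss01; rw [if_pos]; linarith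
      have hsum : (1:ℝ) ≤ ∑ y' ∈ Finset.univ.erase y, mloss01 (-(g y')) := by
        have := Finset.single_le_sum (f := fun y' => mloss01 (-(g y')))
          (fun i _ => mloss01_nonneg _) hmem
        linarith
      have h0 : 0 ≤ mloss01 (g y) := mloss01_nonneg _
      unfold LCS
      nlinarith
    · push_neg at hex
      have hφ : mloss01 (g y) = 1 := by unfold mloss01; rw [if_pos (hex y)]
      have h1 : 0 ≤ ∑ y' ∈ Finset.univ.erase y, mloss01 (-(g y')) :=
        Finset.sum_nonneg fun _ _ => mloss01_nonneg _
      unfold LCS; rw [hφ]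
      nlinarith

/-- The score vector realizing a given decision exactly. -/
noncomputable def dvec {K : ℕ} (d : Option (Fin K)) : Fin K → ℝ :=
  fun i => match d with
  | none => -1
  | some z => if i = z then 1 else -1

lemma LCS_dvec {K : ℕ} (c : ℝ) (d : Option (Fin K)) (y : Fin K) :
    LCS mloss01 c (dvec d) y = loss01c c y d := by
  cases d with
  | none =>
    simp [LCS, dvec, loss01c, mloss01]
  | some z =>
    by_cases hzy : z = y
    · subst hzy
      have h1 : ∀ y' ∈ Finset.univ.erase z, mloss01 (-(dvec (some z) y')) = 0 := by
        intro y' hy'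
        have : y' ≠ z := (Finset.mem_erase.1 hy').1
        simp [dvec, this, mloss01]
      rw [LCS, Finset.sum_congr rfl h1]
      simp [dvec, loss01c, mloss01]
    · have h1 : ∀ y' ∈ Finset.univ.erase y,
          mloss01 (-(dvec (some z) y')) = if y' = z then 1 else 0 := by
        intro y' _
        by_cases hy'z : y' = z <;> simp [dvec, hy'z, mloss01]
      rw [LCS, Finset.sum_congr rfl h1, Finset.sum_ite_eq']
      have hzm : z ∈ Finset.univ.erase y := Finset.mem_erase.2 ⟨hzy, Finset.mem_univ _⟩
      rw [if_pos hzm]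
      have hdy : dvec (some z) y = -1 := by
        have : y ≠ z := fun h => hzy h.symm
        simp [dvec, this]
      rw [hdy]
      simp [loss01c, hzy, mloss01]

instance {K : ℕ} : MeasurableSingletonClass (Option (Fin K)) := ⟨fun _ => trivial⟩

lemma measurable_decRule {K : ℕ} : Measurable (decRule (K := K)) := by
  have hfib : ∀ z : Fin K, MeasurableSet {v : Fin K → ℝ | decRule v = some z} := by
    intro z
    have heq : {v : Fin K → ℝ | decRule v = some z}
        = {v : Fin K → ℝ | 0 < v z} ∩ ⋂ y, {v : Fin K → ℝ | 0 < v y → y = z} := by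
      ext v
      simp [decRule_eq_some_iff, Set.mem_iInter]
    rw [heq]
    refine MeasurableSet.inter ?_ (MeasurableSet.iInter fun y => ?_)
    · exact measurableSet_lt measurable_const (measurable_pi_apply z)
    · by_cases hyz : y = z
      · simp [hyz]
      · have : {v : Fin K → ℝ | 0 < v y → y = z} = {v : Fin K → ℝ | v y ≤ 0} := by
          ext v
          simp only [Set.mem_setOf_eq]
          constructor
          · intro hv
            by_contra hp
            push_neg at hp
            exact hyz (hv hp)
          · intro hv hp
            exact absurd hp (not_lt.2 hv)
        rw [this]
        exact measurableSet_le (measurable_pi_apply y) measurable_const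
  apply measurable_to_countable'
  intro d
  cases d with
  | some z => exact hfib z
  | none =>
    have : decRule ⁻¹' {(none : Option (Fin K))}
        = (⋃ z, {v : Fin K → ℝ | decRule v = some z})ᶜ := by
      ext v
      simp only [Set.mem_preimage, Set.mem_singleton_iff, Set.mem_compl_iff, Set.mem_iUnion,
        Set.mem_setOf_eq]
      cases h : decRule v <;> simp
    rw [this]
    exact (MeasurableSet.iUnion hfib).compl

lemma measurable_LCS_v {K : ℕ} (c : ℝ) (y : Fin K) :
    Measurable (fun v : Fin K → ℝ => LCS mloss01 c v y) := by
  unfold LCS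
  refine Measurable.add ?_ ?_
  · exact (measurable_mloss01.comp (measurable_pi_apply y)).const_mul c
  · exact (Finset.measurable_sum _ fun y' _ =>
      measurable_mloss01.comp (measurable_pi_apply y').neg).const_mul (1 - c)

lemma measurable_LCS_integrand {X : Type*} [MeasurableSpace X] {K : ℕ} (c : ℝ)
    (g : X → Fin K → ℝ) (hg : Measurable g) :
    Measurable (fun p : X × Fin K => LCS mloss01 c (g p.1) p.2) := by
  have heq : (fun p : X × Fin K => LCS mloss01 c (g p.1) p.2)
      = fun p => ∑ y : Fin K, if p.2 = y then LCS mloss01 c (g p.1) y else 0 := by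
    funext p
    rw [Finset.sum_ite_eq]
    simp
  rw [heq]
  refine Finset.measurable_sum _ fun y _ => ?_
  refine Measurable.ite ?_ ((measurable_LCS_v c y).comp (hg.comp measurable_fst)) measurable_const
  exact measurable_snd (measurableSet_singleton y)

lemma measurable_loss_integrand {X : Type*} [MeasurableSpace X] {K : ℕ} (c : ℝ)
    (h : X → Option (Fin K)) (hh : Measurable h) :
    Measurable (fun p : X × Fin K => loss01c c p.2 (h p.1)) := by
  have hΨ : Measurable (fun q : Fin K × Option (Fin K) => loss01c c q.1 q.2) :=
    measurable_of_countable _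
  exact hΨ.comp (measurable_snd.prodMk (hh.comp measurable_fst))

end AuxStmt12

/-- (Theorem 2, inequality (7).) The zero-one-c regret of the decision rule induced
by a measurable score function `g` is bounded by the regret of the cost-sensitive
surrogate with the margin zero-one loss, and the two Bayes risks coincide. -/

theorem stmt12 (c : ℝ) (hc0 : 0 < c) (hc : c < 1/2) (K : ℕ) (hK : 2 ≤ K)
    (X : Type*) [MeasurableSpace X] (P : Measure (X × Fin K)) [IsProbabilityMeasure P]
    (g : X → Fin K → ℝ) (hg : Measurable g) :
    R01c c P (fun x => decRule (g x)) - R01cStar X K c P ≤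
      RCS mloss01 c P g - RCSStar X K mloss01 c P ∧
    R01cStar X K c P = RCSStar X K mloss01 c P := by
  have hc1 : c ≤ 1 := by linarith
  -- integrability
  have int_loss : ∀ (h : X → Option (Fin K)), Measurable h →
      Integrable (fun p : X × Fin K => loss01c c p.2 (h p.1)) P := by
    intro h hh
    refine (integrable_const (1:ℝ)).mono'
      (measurable_loss_integrand c h hh).aestronglyMeasurable (ae_of_all _ fun p => ?_)
    rw [Real.norm_eq_abs, abs_of_nonneg (loss01c_nonneg hc0.le _ _)]
    exact loss01c_le_one hc1 _ _
  have int_lcs : ∀ (g' : X → Fin K → ℝ), Measurable g' →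
      Integrable (fun p : X × Fin K => LCS mloss01 c (g' p.1) p.2) P := by
    intro g' hg'
    refine (integrable_const ((1:ℝ) + K)).mono'
      (measurable_LCS_integrand c g' hg').aestronglyMeasurable (ae_of_all _ fun p => ?_)
    rw [Real.norm_eq_abs, abs_of_nonneg (LCS_nonneg hc0.le hc1 _ _)]
    exact LCS_le hc0.le hc1 _ _
  have risk_le : ∀ (g' : X → Fin K → ℝ), Measurable g' →
      R01c c P (fun x => decRule (g' x)) ≤ RCS mloss01 c P g' := by
    intro g' hg'
    exact integral_mono (int_loss _ (measurable_decRule.comp hg')) (int_lcs _ hg')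
      (fun p => pointwise_le hc0 hc (g' p.1) p.2)
  have risk_eq : ∀ (h : X → Option (Fin K)),
      RCS mloss01 c P (fun x => dvec (h x)) = R01c c P h := by
    intro h
    exact integral_congr_ae (ae_of_all _ fun p => LCS_dvec c (h p.1) p.2)
  have hne1 : {r : ℝ | ∃ h : X → Option (Fin K), Measurable h ∧ r = R01c c P h}.Nonempty :=
    ⟨_, fun _ => none, measurable_const, rfl⟩
  have hne2 : {r : ℝ | ∃ g' : X → Fin K → ℝ, Measurable g' ∧ r = RCS mloss01 c P g'}.Nonempty :=
    ⟨_, g, hg, rfl⟩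
  have hbdd1 : BddBelow {r : ℝ | ∃ h : X → Option (Fin K), Measurable h ∧ r = R01c c P h} := by
    refine ⟨0, ?_⟩
    rintro r ⟨h, hh, rfl⟩
    exact integral_nonneg fun p => loss01c_nonneg hc0.le _ _
  have hbdd2 : BddBelow {r : ℝ | ∃ g' : X → Fin K → ℝ, Measurable g' ∧ r = RCS mloss01 c P g'} := by
    refine ⟨0, ?_⟩
    rintro r ⟨g', hg', rfl⟩
    exact integral_nonneg fun p => LCS_nonneg hc0.le hc1 _ _
  have hstar : R01cStar X K c P = RCSStar X K mloss01 c P := by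
    unfold R01cStar RCSStar
    apply le_antisymm
    · refine le_csInf hne2 ?_
      rintro r ⟨g', hg', rfl⟩
      exact le_trans
        (csInf_le hbdd1 ⟨fun x => decRule (g' x), measurable_decRule.comp hg', rfl⟩)
        (risk_le g' hg')
    · refine le_csInf hne1 ?_
      rintro r ⟨h, hh, rfl⟩
      exact csInf_le hbdd2 ⟨fun x => dvec (h x), (measurable_from_top (f := dvec)).comp hh, (risk_eq h).symm⟩
  refine ⟨?_, hstar⟩
  rw [hstar]
  exact sub_le_sub_right (risk_le g hg) _
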